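/- Let A be a finite set of nonnegative integers with 0 ∈ A, and A(X) = Σ_{a∈A} X^a its mask polynomial. If A tiles ℤ (i.e. ℤ = A ⊕ B for some B ⊆ ℤ), then condition (T1) holds: A(1) = ∏_{s ∈ S_A} Φ_s(1), where S_A is the set of prime powers p^a such that Φ_{p^a}(X) divides A(X). -/

import Mathlib

open Polynomial Finset

private lemma prim_of_coeff_one {p : ℤ[X]} {k : ℕ} (hk : p.coeff k = 1) : p.IsPrimitive := by
  intro r hr
  have h := (Polynomial.C_dvd_iff_dvd_coeff r p).mp hr k
  rw [hk] at h
  exact isUnit_of_dvd_one h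

private lemma prod_cyc_dvd {p : ℤ[X]} (hp : p.IsPrimitive) (S : Finset ℕ)
    (hd : ∀ t ∈ S, cyclotomic t ℤ ∣ p) : (∏ t ∈ S, cyclotomic t ℤ) ∣ p := by
  have hmon : (∏ t ∈ S, cyclotomic t ℤ).Monic :=
    monic_prod_of_monic _ _ fun i _ => cyclotomic.monic i ℤ
  rw [IsPrimitive.Int.dvd_iff_map_cast_dvd_map_cast _ _ hmon.isPrimitive]
  rw [Polynomial.map_prod]
  refine Finset.prod_dvd_of_coprime ?_ ?_
  · intro i _ j _ hij
    simp only [Function.onFun, map_cyclotomic_int]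
    exact cyclotomic.isCoprime_rat hij
  · intro i hi
    exact Polynomial.map_dvd _ (hd i hi)

private lemma eval_one_pp {t : ℕ} (ht : IsPrimePow t) :
    ∃ p : ℕ, p.Prime ∧ (cyclotomic t ℤ).eval 1 = p := by
  obtain ⟨p, k, hp, hk, rfl⟩ := ht
  have hp' : p.Prime := hp.nat_prime
  haveI : Fact p.Prime := ⟨hp'⟩
  obtain ⟨k, rfl⟩ := Nat.exists_eq_add_of_lt hk
  refine ⟨p, hp', ?_⟩
  rw [zero_add, eval_one_cyclotomic_prime_pow]

private lemma tiling_periodic (A : Finset ℕ) (h0 : 0 ∈ A) (B : Set ℤ)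
    (htile : ∀ n : ℤ, ∃! p : ℤ × ℤ, (∃ a ∈ A, (a : ℤ) = p.1) ∧ p.2 ∈ B ∧ p.1 + p.2 = n) :
    ∃ s : ℕ, 0 < s ∧ ∀ n : ℤ, n ∈ B ↔ n + s ∈ B := by
  classical
  set M := A.max' ⟨0, h0⟩ with hM
  set D : ℕ := M + 1 with hD
  set w : ℤ → Finset ℕ := fun t => (range D).filter (fun i => (t + i : ℤ) ∈ B) with hw
  have hwmem : ∀ t : ℤ, ∀ i : ℕ, i ∈ w t ↔ i < D ∧ (t + i : ℤ) ∈ B := by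
    intro t i; simp [hw, Finset.mem_filter, Finset.mem_range]
  -- key: membership of t + D in B is determined by the window at t
  have key : ∀ t : ℤ, ((t + D : ℤ) ∈ B) ↔
      ¬ ∃ a ∈ A, ∃ j < D, ((t + j : ℤ) ∈ B ∧ (a : ℤ) + j = D) := by
    intro t
    constructor
    · intro ht
      rintro ⟨a, haA, j, hj, hjB, hsum⟩
      obtain ⟨p, -, hup⟩ := htile (t + D)
      have h1 : ((0 : ℤ), (t + D : ℤ)) = p :=
        hup _ ⟨⟨0, h0, by norm_num⟩, ht, by show (0:ℤ) + (t + D) = t + D; ring⟩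
      have h2 : ((a : ℤ), (t + j : ℤ)) = p :=
        hup _ ⟨⟨a, haA, rfl⟩, hjB, by show (a:ℤ) + (t + j) = t + D; linarith⟩
      have h3 : (t + (D:ℤ)) = t + j := congrArg Prod.snd (h1.trans h2.symm)
      have : (j : ℤ) = D := by linarith
      have : j = D := by exact_mod_cast this
      omega
    · intro h
      obtain ⟨p, ⟨⟨a, haA, ha1⟩, hpB, hsum⟩, -⟩ := htile (t + D)
      have haM : a ≤ M := A.le_max' a haA
      by_cases ha0 : a = 0
      · subst ha0
        have : p.2 = t + D := by rw [← ha1] at hsum; push_cast at hsum ⊢; linarith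
        rwa [this] at hpB
      · exfalso
        apply h
        have hcast : (↑(D - a) : ℤ) = (D : ℤ) - a := by
          push_cast [Nat.cast_sub (by omega : a ≤ D)]; ring
        refine ⟨a, haA, D - a, by omega, ?_, by rw [hcast]; ring⟩
        rw [hcast]
        have : p.2 = t + ((D : ℤ) - a) := by rw [← ha1] at hsum; linarith
        rwa [this] at hpB
  -- forced forward step
  have step : ∀ t t' : ℤ, w t = w t' → w (t + 1) = w (t' + 1) := by
    intro t t' h
    have hmem : ∀ i : ℕ, i < D → (((t + i : ℤ) ∈ B) ↔ ((t' + i : ℤ) ∈ B)) := by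
      intro i hi
      constructor
      · intro hb; exact ((hwmem t' i).mp (h ▸ (hwmem t i).mpr ⟨hi, hb⟩)).2
      · intro hb; exact ((hwmem t i).mp (h.symm ▸ (hwmem t' i).mpr ⟨hi, hb⟩)).2
    have main : ∀ i : ℕ, i < D → (((t + 1 + i : ℤ) ∈ B) → ((t' + 1 + i : ℤ) ∈ B)) := by
      intro i hi hb
      by_cases hiD : i + 1 < D
      · have e1 : (t + 1 + (i:ℤ)) = t + ((i+1 : ℕ) : ℤ) := by push_cast; ring
        have e2 : (t' + 1 + (i:ℤ)) = t' + ((i+1 : ℕ) : ℤ) := by push_cast; ring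
        rw [e2]; rw [e1] at hb
        exact (hmem (i + 1) hiD).mp hb
      · have hiM : i = M := by omega
        subst hiM
        have e1 : (t + 1 + (M : ℤ)) = t + D := by push_cast [hD]; ring
        have e2 : (t' + 1 + (M : ℤ)) = t' + D := by push_cast [hD]; ring
        rw [e1] at hb; rw [e2]
        rw [key t']; rw [key t] at hb
        intro hc; apply hb
        obtain ⟨a, haA, j, hj, hjB, hs⟩ := hc
        exact ⟨a, haA, j, hj, (hmem j hj).mpr hjB, hs⟩
    have main' : ∀ i : ℕ, i < D → (((t' + 1 + i : ℤ) ∈ B) → ((t + 1 + i : ℤ) ∈ B)) := by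
      intro i hi hb
      by_cases hiD : i + 1 < D
      · have e1 : (t + 1 + (i:ℤ)) = t + ((i+1 : ℕ) : ℤ) := by push_cast; ring
        have e2 : (t' + 1 + (i:ℤ)) = t' + ((i+1 : ℕ) : ℤ) := by push_cast; ring
        rw [e1]; rw [e2] at hb
        exact (hmem (i + 1) hiD).mpr hb
      · have hiM : i = M := by omega
        subst hiM
        have e1 : (t + 1 + (M : ℤ)) = t + D := by push_cast [hD]; ring
        have e2 : (t' + 1 + (M : ℤ)) = t' + D := by push_cast [hD]; ring
        rw [e2] at hb; rw [e1]
        rw [key t]; rw [key t'] at hb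
        intro hc; apply hb
        obtain ⟨a, haA, j, hj, hjB, hs⟩ := hc
        exact ⟨a, haA, j, hj, (hmem j hj).mp hjB, hs⟩
    ext i
    rw [hwmem, hwmem]
    exact ⟨fun ⟨hi, hb⟩ => ⟨hi, main i hi hb⟩, fun ⟨hi, hb⟩ => ⟨hi, main' i hi hb⟩⟩
  -- propagation
  have prop : ∀ t t' : ℤ, w t = w t' → ∀ m : ℕ, w (t + m) = w (t' + m) := by
    intro t t' h m
    induction m with
    | zero => simpa using h
    | succ k ih =>
        have h2 := step _ _ ih
        have e1 : (t + k + 1 : ℤ) = t + ((k + 1 : ℕ) : ℤ) := by push_cast; ring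
        have e2 : (t' + k + 1 : ℤ) = t' + ((k + 1 : ℕ) : ℤ) := by push_cast; ring
        rwa [e1, e2] at h2
  -- pigeonhole
  set f : ℕ → {x // x ∈ (range D).powerset} :=
    fun k => ⟨w (-(k : ℤ)), Finset.mem_powerset.2 (Finset.filter_subset _ _)⟩ with hf
  obtain ⟨v, hv⟩ := Finite.exists_infinite_fiber f
  have hinf : (f ⁻¹' {v}).Infinite := Set.infinite_coe_iff.mp hv
  have hweq : ∀ k k' : ℕ, k ∈ f ⁻¹' {v} → k' ∈ f ⁻¹' {v} → w (-(k:ℤ)) = w (-(k':ℤ)) := by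
    intro k k' hk hk'
    simp only [Set.mem_preimage, Set.mem_singleton_iff] at hk hk'
    exact congrArg Subtype.val (hk.trans hk'.symm)
  obtain ⟨k1, hk1, -⟩ := hinf.exists_gt 0
  obtain ⟨k2, hk2, hk12⟩ := hinf.exists_gt k1
  refine ⟨k2 - k1, by omega, ?_⟩
  -- period s = k2 - k1
  set s : ℕ := k2 - k1 with hs
  have hper : ∀ t : ℤ, w t = w (t + s) := by
    intro t
    obtain ⟨k, hk, hkgt⟩ := hinf.exists_gt (max k2 (-t).toNat)
    have hkk2 : k2 ≤ k := le_of_lt (lt_of_le_of_lt (le_max_left _ _) hkgt)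
    have hkt : -(k:ℤ) ≤ t := by
      have : (-t).toNat < k := lt_of_le_of_lt (le_max_right _ _) hkgt
      omega
    -- w t = w (t + (k - k2))
    have h1 : w t = w (t + ((k : ℤ) - k2)) := by
      have := prop (-(k:ℤ)) (-(k2:ℤ)) (hweq k k2 hk hk2) (t + k).toNat
      have e1 : -(k:ℤ) + ((t + k).toNat : ℤ) = t := by omega
      have e2 : -(k2:ℤ) + ((t + k).toNat : ℤ) = t + ((k : ℤ) - k2) := by omega
      rwa [e1, e2] at this
    -- w (t + s) = w (t + (k - k2) + s)
    have h2 : w (t + (s:ℤ)) = w (t + ((k : ℤ) - k2) + s) := by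
      have := prop (-(k:ℤ)) (-(k2:ℤ)) (hweq k k2 hk hk2) (t + s + k).toNat
      have e1 : -(k:ℤ) + ((t + s + k).toNat : ℤ) = t + s := by omega
      have e2 : -(k2:ℤ) + ((t + s + k).toNat : ℤ) = t + ((k : ℤ) - k2) + s := by omega
      rwa [e1, e2] at this
    -- w (t + (k - k2)) = w (t + (k - k2) + s)
    have h3 : w (t + ((k : ℤ) - k2)) = w (t + ((k : ℤ) - k2) + s) := by
      have := prop (-(k2:ℤ)) (-(k1:ℤ)) (hweq k2 k1 hk2 hk1) (t + k).toNat
      have e1 : -(k2:ℤ) + ((t + k).toNat : ℤ) = t + ((k : ℤ) - k2) := by omega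
      have e2 : -(k1:ℤ) + ((t + k).toNat : ℤ) = t + ((k : ℤ) - k2) + s := by
        have : (s : ℤ) = (k2 : ℤ) - k1 := by omega
        omega
      rwa [e1, e2] at this
    rw [h1, h3, ← h2]
  intro n
  have := hper n
  have h0' := (hwmem n 0)
  have h1' := (hwmem (n + s) 0)
  constructor
  · intro hb
    have : (0 : ℕ) ∈ w (n + s) := this ▸ (hwmem n 0).mpr ⟨by omega, by simpa using hb⟩
    simpa using ((hwmem (n + s) 0).mp this).2
  · intro hb
    have : (0 : ℕ) ∈ w n := this.symm ▸ (hwmem (n + s) 0).mpr ⟨by omega, by simpa using hb⟩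
    simpa using ((hwmem n 0).mp this).2

private lemma tiling_count (A : Finset ℕ) (B : Set ℤ)
    (htile : ∀ n : ℤ, ∃! p : ℤ × ℤ, (∃ a ∈ A, (a : ℤ) = p.1) ∧ p.2 ∈ B ∧ p.1 + p.2 = n)
    (s : ℕ) (hs : 0 < s) (hper : ∀ n : ℤ, n ∈ B ↔ n + s ∈ B)
    (Bf : Finset ℕ) (hBf : ∀ b : ℕ, b ∈ Bf ↔ b < s ∧ (b:ℤ) ∈ B)
    (r : ℕ) (hr : r < s) [DecidablePred fun q : ℕ × ℕ => (q.1 + q.2) % s = r] :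
    ((A ×ˢ Bf).filter (fun q : ℕ × ℕ => (q.1 + q.2) % s = r)).card = 1 := by
  classical
  have hm : ∀ (m : ℕ) (n : ℤ), n ∈ B ↔ n + m * s ∈ B := by
    intro m
    induction m with
    | zero => intro n; simp
    | succ k ih =>
      intro n
      have h2 := hper (n + k * s)
      have e : (n + k * s + s : ℤ) = n + ((k+1 : ℕ) : ℤ) * s := by push_cast; ring
      rw [e] at h2
      exact (ih n).trans h2
  have hz : ∀ (n : ℤ) (k : ℤ), n + k * s ∈ B ↔ n ∈ B := by
    intro n k
    rcases le_or_gt 0 k with h | h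
    · have e : n + k * s = n + (k.toNat : ℤ) * s := by rw [Int.toNat_of_nonneg h]
      rw [e]; exact (hm k.toNat n).symm
    · have e : (n + k * s) + ((-k).toNat : ℤ) * s = n := by
        rw [Int.toNat_of_nonneg (by omega : (0:ℤ) ≤ -k)]; ring
      have := hm (-k).toNat (n + k * s)
      rw [e] at this; exact this
  obtain ⟨p0, ⟨⟨a0, ha0A, ha0⟩, hb0B, hsum0⟩, hu0⟩ := htile (r : ℤ)
  set b0 : ℤ := p0.2 with hb0
  set b1 : ℤ := b0 % (s : ℤ) with hb1
  have hsz : (0:ℤ) < s := by exact_mod_cast hs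
  have hb1nn : 0 ≤ b1 := Int.emod_nonneg b0 (by omega)
  have hb1lt : b1 < s := Int.emod_lt_of_pos b0 hsz
  have hb1eq : b1 = b0 + (-(b0 / s)) * s := by rw [hb1, Int.emod_def]; ring
  have hb1B : b1 ∈ B := by rw [hb1eq]; exact (hz b0 _).mpr hb0B
  set q0 : ℕ × ℕ := (a0, b1.toNat) with hq0
  have hb1cast : ((b1.toNat : ℤ)) = b1 := Int.toNat_of_nonneg hb1nn
  rw [Finset.card_eq_one]
  refine ⟨q0, ?_⟩
  rw [Finset.eq_singleton_iff_unique_mem]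
  constructor
  · rw [Finset.mem_filter, Finset.mem_product]
    have hlt' : b1.toNat < s := by
      have := hb1cast ▸ hb1lt; exact_mod_cast this
    refine ⟨⟨ha0A, (hBf _).mpr ⟨hlt', by rw [hb1cast]; exact hb1B⟩⟩, ?_⟩
    have h5 : ((a0:ℤ) + b1) % s = r := by
      have e : (a0 : ℤ) + b1 = ((a0:ℤ) + b0) + (-(b0 / s)) * s := by rw [hb1eq]; ring
      rw [e, Int.add_mul_emod_self_right]
      rw [← ha0] at hsum0
      rw [hsum0]
      exact Int.emod_eq_of_lt (by positivity) (by exact_mod_cast hr)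
    rw [← hb1cast] at h5
    exact_mod_cast h5
  · rintro ⟨a, b⟩ hq
    rw [Finset.mem_filter, Finset.mem_product] at hq
    obtain ⟨⟨haA, hbBf⟩, hmod⟩ := hq
    obtain ⟨hblt, hbB⟩ := (hBf b).mp hbBf
    set k : ℕ := (a + b) / s with hk
    have hab : a + b = s * k + r := by rw [hk, ← hmod]; exact (Nat.div_add_mod (a+b) s).symm
    obtain ⟨p, -, hup⟩ := htile ((a + b : ℕ) : ℤ)
    have h1 : ((a:ℤ), (b:ℤ)) = p := hup _ ⟨⟨a, haA, rfl⟩, hbB, by push_cast; ring⟩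
    have h2 : (p0.1, b0 + (k:ℤ) * s) = p := by
      refine hup _ ⟨⟨a0, ha0A, ha0⟩, (hz b0 k).mpr hb0B, ?_⟩
      show p0.1 + (b0 + (k:ℤ) * s) = ((a + b : ℕ) : ℤ)
      have : p0.1 + b0 = r := hsum0
      push_cast [hab]
      linarith
    have h3 := h1.trans h2.symm
    have ha' : (a : ℤ) = p0.1 := congrArg Prod.fst h3
    have hb' : (b : ℤ) = b0 + (k:ℤ) * s := congrArg Prod.snd h3
    have haa0 : a = a0 := by
      have : (a : ℤ) = (a0 : ℤ) := by rw [ha', ← ha0]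
      exact_mod_cast this
    have hbb1 : (b : ℤ) = b1 := by
      have e1 : (b : ℤ) % s = (b0 + (k:ℤ) * s) % s := by rw [hb']
      rw [Int.add_mul_emod_self_right] at e1
      rwa [Int.emod_eq_of_lt (by positivity) (by exact_mod_cast hblt)] at e1
    have : b = b1.toNat := by rw [← hb1cast] at hbb1; exact_mod_cast hbb1
    rw [hq0, Prod.mk.injEq]
    exact ⟨haa0, this⟩

private lemma poly_congr (A Bf : Finset ℕ) (s : ℕ) (hs : 0 < s)
    [DecidableEq (ℕ × ℕ)]
    (hcount : ∀ r < s, ((A ×ˢ Bf).filter (fun q : ℕ × ℕ => (q.1 + q.2) % s = r)).card = 1) :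
    ((X : ℤ[X]) ^ s - 1) ∣ (∑ a ∈ A, X ^ a) * (∑ b ∈ Bf, X ^ b) - ∑ i ∈ range s, X ^ i := by
  classical
  have h1 : (∑ a ∈ A, (X : ℤ[X]) ^ a) * (∑ b ∈ Bf, X ^ b)
      = ∑ q ∈ A ×ˢ Bf, X ^ (q.1 + q.2) := by
    rw [Finset.sum_mul_sum, Finset.sum_product]
    simp [pow_add]
  have h2 : (∑ i ∈ range s, (X : ℤ[X]) ^ i) = ∑ q ∈ A ×ˢ Bf, X ^ ((q.1 + q.2) % s) := by
    rw [← Finset.sum_fiberwise_of_maps_to (g := fun q : ℕ × ℕ => (q.1 + q.2) % s)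
      (t := range s) (fun q _ => mem_range.mpr (Nat.mod_lt _ hs))]
    apply Finset.sum_congr rfl
    intro r hr
    calc (X : ℤ[X]) ^ r
        = ∑ _q ∈ (A ×ˢ Bf).filter (fun q : ℕ × ℕ => (q.1 + q.2) % s = r), (X:ℤ[X]) ^ r := by
          rw [Finset.sum_const, hcount r (mem_range.mp hr), one_smul]
      _ = _ := by
          apply Finset.sum_congr rfl
          intro q hq
          rw [(Finset.mem_filter.mp hq).2]
  rw [h1, h2, ← Finset.sum_sub_distrib]
  apply Finset.dvd_sum
  intro q _
  set n := q.1 + q.2 with hn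
  have e : (X : ℤ[X]) ^ n = X ^ (n % s) * ((X ^ s) ^ (n / s)) := by
    rw [← pow_mul, ← pow_add, Nat.mod_add_div]
  rw [e]
  have e2 : (X:ℤ[X]) ^ (n % s) * ((X ^ s) ^ (n / s)) - X ^ (n % s)
      = X ^ (n % s) * ((X ^ s) ^ (n / s) - 1) := by ring
  rw [e2]
  exact Dvd.dvd.mul_left (by simpa using sub_dvd_pow_sub_pow ((X:ℤ[X])^s) 1 (n / s)) _



theorem stmt_9 (A : Finset ℕ) (h0 : 0 ∈ A)
    (P : ℤ[X]) (hP : P = ∑ a ∈ A, X ^ a)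
    (B : Set ℤ)
    (htile : ∀ n : ℤ, ∃! p : ℤ × ℤ, (∃ a ∈ A, (a : ℤ) = p.1) ∧ p.2 ∈ B ∧ p.1 + p.2 = n)
    (S : Set ℕ) (hS : S = {s : ℕ | IsPrimePow s ∧ cyclotomic s ℤ ∣ P})
    (hfin : S.Finite) :
    P.eval 1 = ∏ s ∈ hfin.toFinset, (cyclotomic s ℤ).eval 1 := by
  classical
  obtain ⟨s, hs, hper⟩ := tiling_periodic A h0 B htile
  set Bf : Finset ℕ := (range s).filter (fun b => (b:ℤ) ∈ B) with hBfdef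
  have hBf : ∀ b : ℕ, b ∈ Bf ↔ b < s ∧ (b:ℤ) ∈ B := by
    intro b; simp [hBfdef, Finset.mem_filter, Finset.mem_range]
  have hcount : ∀ r < s,
      ((A ×ˢ Bf).filter (fun q : ℕ × ℕ => (q.1 + q.2) % s = r)).card = 1 :=
    fun r hr => tiling_count A B htile s hs hper Bf hBf r hr
  set Q : ℤ[X] := ∑ b ∈ Bf, X ^ b with hQ
  set G : ℤ[X] := ∑ i ∈ range s, X ^ i with hG
  obtain ⟨C, hC⟩ : ((X : ℤ[X]) ^ s - 1) ∣ P * Q - G := by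
    rw [hP]; exact poly_congr A Bf s hs hcount
  -- eval at 1 of the congruence
  have hPQ : P.eval 1 * Q.eval 1 = (s : ℤ) := by
    have h := congrArg (eval 1) hC
    simp only [eval_sub, eval_mul, eval_pow, eval_X, eval_one, one_pow, sub_self, zero_mul] at h
    have hG1 : G.eval 1 = (s : ℤ) := by
      simp [hG, eval_finset_sum]
    have : P.eval 1 * Q.eval 1 - G.eval 1 = 0 := by linarith [h]
    rw [hG1] at this; linarith
  -- Bf nonempty
  have hBfne : Bf.Nonempty := by
    have h := hcount 0 hs
    rcases Finset.card_eq_one.mp h with ⟨q, hq⟩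
    have : q ∈ (A ×ˢ Bf).filter (fun q : ℕ × ℕ => (q.1 + q.2) % s = 0) := by
      rw [hq]; exact Finset.mem_singleton_self q
    exact ⟨q.2, (Finset.mem_product.mp (Finset.mem_filter.mp this).1).2⟩
  -- evaluations are cardinalities
  have hPe : P.eval 1 = (A.card : ℤ) := by simp [hP, eval_finset_sum]
  have hQe : Q.eval 1 = (Bf.card : ℤ) := by simp [hQ, eval_finset_sum]
  have hαpos : 0 < P.eval 1 := by
    rw [hPe]; exact_mod_cast Finset.card_pos.mpr ⟨0, h0⟩
  have hβpos : 0 < Q.eval 1 := by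
    rw [hQe]; exact_mod_cast Finset.card_pos.mpr hBfne
  -- primitivity
  have hPprim : P.IsPrimitive := by
    apply prim_of_coeff_one (k := 0)
    rw [hP, finset_sum_coeff]
    simp only [coeff_X_pow]
    rw [Finset.sum_ite_eq A 0 (fun _ => (1:ℤ))]
    simp [h0]
  have hQprim : Q.IsPrimitive := by
    obtain ⟨b, hb⟩ := hBfne
    apply prim_of_coeff_one (k := b)
    rw [hQ, finset_sum_coeff]
    simp only [coeff_X_pow]
    rw [Finset.sum_ite_eq Bf b (fun _ => (1:ℤ))]
    simp [hb]
  -- the finsets of prime powers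
  set SF : Finset ℕ := hfin.toFinset with hSFdef
  have hSF : ∀ t : ℕ, t ∈ SF ↔ IsPrimePow t ∧ cyclotomic t ℤ ∣ P := by
    intro t; rw [hSFdef, Set.Finite.mem_toFinset, hS]; rfl
  set T : Finset ℕ := s.divisors.filter (fun d => IsPrimePow d ∧ cyclotomic d ℤ ∣ Q) with hT
  set x : ℤ := ∏ t ∈ SF, (cyclotomic t ℤ).eval 1 with hx
  set y : ℤ := ∏ t ∈ T, (cyclotomic t ℤ).eval 1 with hy
  have hfactor : ∀ t : ℕ, IsPrimePow t → (1 : ℤ) ≤ (cyclotomic t ℤ).eval 1 := by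
    intro t ht
    obtain ⟨p, hp, he⟩ := eval_one_pp ht
    rw [he]; exact_mod_cast hp.one_lt.le
  have hxpos : 0 < x := Finset.prod_pos fun t ht =>
    lt_of_lt_of_le one_pos (hfactor t ((hSF t).mp ht).1)
  have hypos : 0 < y := Finset.prod_pos fun t ht =>
    lt_of_lt_of_le one_pos (hfactor t ((Finset.mem_filter.mp ht).2).1)
  -- x ∣ P.eval 1, y ∣ Q.eval 1
  have hxdvd : x ∣ P.eval 1 := by
    have := prod_cyc_dvd hPprim SF (fun t ht => ((hSF t).mp ht).2)
    have h2 := eval_dvd (x := (1:ℤ)) this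
    rwa [eval_prod] at h2
  have hydvd : y ∣ Q.eval 1 := by
    have := prod_cyc_dvd hQprim T (fun t ht => ((Finset.mem_filter.mp ht).2).2)
    have h2 := eval_dvd (x := (1:ℤ)) this
    rwa [eval_prod] at h2
  have hxle : x ≤ P.eval 1 := Int.le_of_dvd hαpos hxdvd
  have hyle : y ≤ Q.eval 1 := Int.le_of_dvd hβpos hydvd
  -- s as a product of cyclotomic values
  have hseq : (s : ℤ) = ∏ d ∈ s.divisors.erase 1, (cyclotomic d ℤ).eval 1 := by
    have h := congrArg (eval (1:ℤ)) (prod_cyclotomic_eq_geom_sum hs ℤ)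
    rw [eval_prod] at h
    rw [h]
    simp [eval_finset_sum]
  set PP : Finset ℕ := (s.divisors.erase 1).filter IsPrimePow with hPP
  have hseq2 : (s : ℤ) = ∏ d ∈ PP, (cyclotomic d ℤ).eval 1 := by
    rw [hseq, hPP, Finset.prod_filter_of_ne]
    intro d hd hne
    by_contra hnpp
    apply hne
    apply eval_one_cyclotomic_not_prime_pow
    intro p hp k hE
    rcases Nat.eq_zero_or_pos k with rfl | hk
    · rw [pow_zero] at hE
      exact (Finset.mem_erase.mp hd).1 hE.symm
    · exact hnpp ⟨p, k, hp.prime, hk, hE⟩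
  -- each prime power divisor divides P or Q
  have hsub : PP ⊆ SF ∪ T := by
    intro d hd
    rw [hPP, Finset.mem_filter, Finset.mem_erase, Nat.mem_divisors] at hd
    obtain ⟨⟨hd1, hds, hs0⟩, hdpp⟩ := hd
    have hdpos : 0 < d := hdpp.pos
    have hdG : cyclotomic d ℤ ∣ G := by
      rw [hG]; exact cyclotomic_dvd_geom_sum_of_dvd ℤ hds hd1
    have hGX : G ∣ (X : ℤ[X]) ^ s - 1 := ⟨X - 1, (geom_sum_mul _ _).symm⟩
    have hdPQ : cyclotomic d ℤ ∣ P * Q := by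
      have hPQeq : P * Q = G + ((X : ℤ[X]) ^ s - 1) * C := by linear_combination hC
      rw [hPQeq]
      exact dvd_add hdG ((hdG.trans hGX).mul_right C)
    have hprime : Prime (cyclotomic d ℤ) :=
      UniqueFactorizationMonoid.irreducible_iff_prime.mp (cyclotomic.irreducible hdpos)
    rcases hprime.2.2 P Q hdPQ with h | h
    · exact Finset.mem_union_left _ ((hSF d).mpr ⟨hdpp, h⟩)
    · exact Finset.mem_union_right _
        (Finset.mem_filter.mpr ⟨Nat.mem_divisors.mpr ⟨hds, hs0⟩, hdpp, h⟩)
  -- s ≤ x * y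
  have hsxy : (s : ℤ) ≤ x * y := by
    have h1 : (∏ d ∈ PP, (cyclotomic d ℤ).eval 1) ∣ ∏ d ∈ SF ∪ T, (cyclotomic d ℤ).eval 1 :=
      Finset.prod_dvd_prod_of_subset _ _ _ hsub
    have h2 : (∏ d ∈ SF ∪ T, (cyclotomic d ℤ).eval 1) ∣ x * y := by
      refine ⟨∏ d ∈ SF ∩ T, (cyclotomic d ℤ).eval 1, ?_⟩
      rw [hx, hy, Finset.prod_union_inter]
    have hxy : 0 < x * y := mul_pos hxpos hypos
    rw [hseq2]
    exact Int.le_of_dvd hxy (h1.trans h2)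
  -- finish
  have hchain : x * Q.eval 1 ≤ P.eval 1 * Q.eval 1 :=
    mul_le_mul_of_nonneg_right hxle (le_of_lt hβpos)
  have hchain2 : x * y ≤ x * Q.eval 1 :=
    mul_le_mul_of_nonneg_left hyle (le_of_lt hxpos)
  have hfin1 : x * Q.eval 1 = P.eval 1 * Q.eval 1 := le_antisymm hchain (by
    calc P.eval 1 * Q.eval 1 = (s:ℤ) := hPQ
      _ ≤ x * y := hsxy
      _ ≤ x * Q.eval 1 := hchain2)
  have := mul_right_cancel₀ (ne_of_gt hβpos) hfin1
  exact this.symm
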